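/- Under hypotheses (H1)–(H4), one has C ∩ H⁺ ⊆ K ∩ H⁺ and K ∩ ([a',0] × ℝ^{n−1}) ⊆ C ∩ ([a',0] × ℝ^{n−1}). -/

import Mathlib

open MeasureTheory Set

-- aux lemma 1: if a.e. point of K has first coordinate 0, K cannot have volume 1
lemma aux_ae_fst_zero_contra {m : ℕ} (K : Set (ℝ × EuclideanSpace ℝ (Fin m)))
    (hKm : MeasurableSet K) (hvol : volume K = 1)
    (hae : ∀ᵐ p ∂(volume.restrict K), p.1 = 0) : False := by
  have h1 : volume ({p : ℝ × EuclideanSpace ℝ (Fin m) | ¬ p.1 = 0} ∩ K) = 0 := by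
    have := ae_iff.mp hae
    rwa [Measure.restrict_apply' hKm] at this
  have h2 : volume {p : ℝ × EuclideanSpace ℝ (Fin m) | p.1 = 0} = 0 := by
    have hset : {p : ℝ × EuclideanSpace ℝ (Fin m) | p.1 = 0}
        = ({0} : Set ℝ) ×ˢ (univ : Set (EuclideanSpace ℝ (Fin m))) := by
      ext p
      exact ⟨fun h => ⟨h, trivial⟩, fun h => h.1⟩
    rw [hset, Measure.volume_eq_prod, Measure.prod_prod, Real.volume_singleton, zero_mul]
  have hsub : K ⊆ ({p : ℝ × EuclideanSpace ℝ (Fin m) | ¬ p.1 = 0} ∩ K)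
      ∪ {p : ℝ × EuclideanSpace ℝ (Fin m) | p.1 = 0} := by
    intro p hp
    by_cases h : p.1 = 0
    · exact Or.inr h
    · exact Or.inl ⟨h, hp⟩
  have hle : volume K ≤ 0 := by
    calc volume K ≤ volume (({p : ℝ × EuclideanSpace ℝ (Fin m) | ¬ p.1 = 0} ∩ K)
          ∪ {p : ℝ × EuclideanSpace ℝ (Fin m) | p.1 = 0}) := measure_mono hsub
      _ ≤ volume ({p : ℝ × EuclideanSpace ℝ (Fin m) | ¬ p.1 = 0} ∩ K)
          + volume {p : ℝ × EuclideanSpace ℝ (Fin m) | p.1 = 0} := measure_union_le _ _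
      _ = 0 := by rw [h1, h2, add_zero]
  rw [hvol] at hle
  simp at hle

-- aux lemma 2: centroid-zero rules out K lying (weakly) on one side of the hyperplane
lemma aux_fst_sign_contra {m : ℕ} (K : Set (ℝ × EuclideanSpace ℝ (Fin m)))
    (hKcomp : IsCompact K) (hvol : volume K = 1)
    (h0 : (∫ p in K, p.1) = 0) (c : ℝ) (hc : c ≠ 0)
    (hle : ∀ p ∈ K, 0 ≤ c * p.1) : False := by
  have hKm : MeasurableSet K := hKcomp.measurableSet
  have hint : IntegrableOn (fun p : ℝ × EuclideanSpace ℝ (Fin m) => c * p.1) K volume :=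
    ((continuous_const.mul continuous_fst).continuousOn).integrableOn_compact hKcomp
  have hI : (∫ p in K, c * p.1) = 0 := by rw [integral_const_mul, h0, mul_zero]
  have hnn : 0 ≤ᵐ[volume.restrict K] fun p : ℝ × EuclideanSpace ℝ (Fin m) => c * p.1 :=
    (ae_restrict_iff' hKm).2 (Filter.Eventually.of_forall hle)
  have hz := (integral_eq_zero_iff_of_nonneg_ae hnn hint).1 hI
  refine aux_ae_fst_zero_contra K hKm hvol ?_
  filter_upwards [hz] with p hp
  have : c * p.1 = 0 := hp
  rcases mul_eq_zero.mp this with h | h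
  · exact absurd h hc
  · exact h

set_option maxHeartbeats 1000000 in
theorem cone_containments (n : ℕ) (hn : 2 ≤ n)
    (K : Set (ℝ × EuclideanSpace ℝ (Fin (n - 1))))
    (hKcomp : IsCompact K) (hKconv : Convex ℝ K)
    -- (H1): the centroid of K is the origin
    (hH1 : (∫ p in K, p) = 0)
    -- (H3): max_x |K_x| = 1
    (hH3le : ∀ x : ℝ, volume {y : EuclideanSpace ℝ (Fin (n - 1)) | (x, y) ∈ K} ≤ 1)
    (hH3eq : ∃ x : ℝ, volume {y : EuclideanSpace ℝ (Fin (n - 1)) | (x, y) ∈ K} = 1)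
    -- (H4): |K| = 1
    (hH4 : volume K = 1)
    (a b : ℝ)
    (ha : IsLeast (Prod.fst '' K) a) (hb : IsGreatest (Prod.fst '' K) b)
    (a' b' : ℝ)
    (hb' : b' = ((n:ℝ) / (volume {y : EuclideanSpace ℝ (Fin (n - 1)) | ((0:ℝ), y) ∈ K}).toReal)
            * (volume (K ∩ {p : ℝ × EuclideanSpace ℝ (Fin (n - 1)) | 0 ≤ p.1})).toReal)
    (ha' : a' = b' - (((n:ℝ) * b' ^ (n - 1))
            / (volume {y : EuclideanSpace ℝ (Fin (n - 1)) | ((0:ℝ), y) ∈ K}).toReal)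
              ^ ((n:ℝ)⁻¹))
    (β : EuclideanSpace ℝ (Fin (n - 1))) (hβ : (b, β) ∈ K)
    (C : Set (ℝ × EuclideanSpace ℝ (Fin (n - 1))))
    (hC : C = convexHull ℝ
      ((({a'} : Set ℝ) ×ˢ
          ((fun y => β + ((b - a') / b) • (y - β)) ''
            {y : EuclideanSpace ℝ (Fin (n - 1)) | ((0:ℝ), y) ∈ K}))
        ∪ {(b, β)}))
    :
    C ∩ {p : ℝ × EuclideanSpace ℝ (Fin (n - 1)) | 0 ≤ p.1}
      ⊆ K ∩ {p : ℝ × EuclideanSpace ℝ (Fin (n - 1)) | 0 ≤ p.1} ∧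
    K ∩ {p : ℝ × EuclideanSpace ℝ (Fin (n - 1)) | p.1 ∈ Icc a' 0}
      ⊆ C ∩ {p : ℝ × EuclideanSpace ℝ (Fin (n - 1)) | p.1 ∈ Icc a' 0} := by
  classical
  set K0 : Set (EuclideanSpace ℝ (Fin (n - 1))) :=
    {y : EuclideanSpace ℝ (Fin (n - 1)) | ((0:ℝ), y) ∈ K} with hK0
  set c : ℝ := (b - a') / b with hcdef
  -- integral of first coordinate is zero
  have hKm : MeasurableSet K := hKcomp.measurableSet
  have hintid : IntegrableOn (fun p : ℝ × EuclideanSpace ℝ (Fin (n - 1)) => p) K volume :=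
    (continuous_id.continuousOn).integrableOn_compact hKcomp
  have hfst0 : (∫ p in K, p.1) = 0 := by
    have := (ContinuousLinearMap.fst ℝ ℝ (EuclideanSpace ℝ (Fin (n - 1)))).integral_comp_comm hintid
    simp only [ContinuousLinearMap.coe_fst'] at this
    rw [this, hH1]
    rfl
  -- b > 0
  have hb_pos : 0 < b := by
    by_contra hble
    push_neg at hble
    refine aux_fst_sign_contra K hKcomp hH4 hfst0 (-1) (by norm_num) ?_
    intro p hp
    have : p.1 ≤ b := hb.2 ⟨p, hp, rfl⟩
    nlinarith
  -- a ≤ 0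
  have ha_le : a ≤ 0 := by
    by_contra hagt
    push_neg at hagt
    refine aux_fst_sign_contra K hKcomp hH4 hfst0 1 (by norm_num) ?_
    intro p hp
    have : a ≤ p.1 := ha.2 ⟨p, hp, rfl⟩
    nlinarith
  -- b' ≥ 0 and a' ≤ 0
  have hnR : (0:ℝ) < n := by positivity
  have hv0 : 0 ≤ (volume K0).toReal := ENNReal.toReal_nonneg
  have hm1 : (volume (K ∩ {p : ℝ × EuclideanSpace ℝ (Fin (n - 1)) | 0 ≤ p.1})).toReal ≤ 1 := by
    have hle : volume (K ∩ {p : ℝ × EuclideanSpace ℝ (Fin (n - 1)) | 0 ≤ p.1}) ≤ 1 := by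
      rw [← hH4]; exact measure_mono inter_subset_left
    calc (volume (K ∩ {p : ℝ × EuclideanSpace ℝ (Fin (n - 1)) | 0 ≤ p.1})).toReal
        ≤ (1 : ENNReal).toReal := ENNReal.toReal_mono (by norm_num) hle
      _ = 1 := by simp
  have hm0 : 0 ≤ (volume (K ∩ {p : ℝ × EuclideanSpace ℝ (Fin (n - 1)) | 0 ≤ p.1})).toReal := ENNReal.toReal_nonneg
  have hb'0 : 0 ≤ b' := by
    rw [hb']
    positivity
  have ha'0 : a' ≤ 0 := by
    have hX0 : 0 ≤ ((n:ℝ) * b' ^ (n - 1)) / (volume K0).toReal := by positivity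
    have hpow : b' ^ n ≤ ((n:ℝ) * b' ^ (n - 1)) / (volume K0).toReal := by
      by_cases hv : (volume K0).toReal = 0
      · have hb'eq : b' = 0 := by rw [hb', hv]; simp
        have hn1 : n - 1 ≠ 0 := by omega
        rw [hb'eq]
        rw [zero_pow (by omega : n ≠ 0)]
        positivity
      · have hvpos : 0 < (volume K0).toReal := lt_of_le_of_ne hv0 (Ne.symm hv)
        have hble : b' ≤ (n:ℝ) / (volume K0).toReal := by
          rw [hb']
          have : (n:ℝ) / (volume K0).toReal * (volume (K ∩ {p : ℝ × EuclideanSpace ℝ (Fin (n - 1)) | 0 ≤ p.1})).toReal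
              ≤ (n:ℝ) / (volume K0).toReal * 1 := by
            apply mul_le_mul_of_nonneg_left hm1 (by positivity)
          simpa using this
        have hstep : b' ^ (n-1) * b' ≤ b' ^ (n-1) * ((n:ℝ) / (volume K0).toReal) :=
          mul_le_mul_of_nonneg_left hble (by positivity)
        have hpoweq : b' ^ n = b' ^ (n-1) * b' := by
          rw [← pow_succ]
          congr 1
          omega
        rw [hpoweq]
        calc b' ^ (n-1) * b' ≤ b' ^ (n-1) * ((n:ℝ) / (volume K0).toReal) := hstep
          _ = ((n:ℝ) * b' ^ (n - 1)) / (volume K0).toReal := by ring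
    have hfinal : b' ≤ (((n:ℝ) * b' ^ (n - 1)) / (volume K0).toReal) ^ ((n:ℝ)⁻¹) := by
      have h1 : b' = ((b' ^ n : ℝ)) ^ ((n:ℝ)⁻¹) := by
        rw [← Real.rpow_natCast b' n, ← Real.rpow_mul hb'0]
        rw [mul_inv_cancel₀ (by positivity : (n:ℝ) ≠ 0), Real.rpow_one]
      calc b' = ((b' ^ n : ℝ)) ^ ((n:ℝ)⁻¹) := h1
        _ ≤ (((n:ℝ) * b' ^ (n - 1)) / (volume K0).toReal) ^ ((n:ℝ)⁻¹) :=
          Real.rpow_le_rpow (by positivity) hpow (by positivity)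
    rw [ha']
    linarith
  -- basic positivity facts
  have hba' : 0 < b - a' := by linarith
  have hc0 : 0 ≤ c := by
    rw [hcdef]; positivity
  have hbne : b ≠ 0 := ne_of_gt hb_pos
  -- the base set A
  set A : Set (ℝ × EuclideanSpace ℝ (Fin (n - 1))) := ({a'} : Set ℝ) ×ˢ
      ((fun y => β + ((b - a') / b) • (y - β)) '' K0) with hA
  have hK0conv : Convex ℝ K0 := by
    intro y₁ h₁ y₂ h₂ u v hu hv huv
    have : u • ((0:ℝ), y₁) + v • ((0:ℝ), y₂) ∈ K := hKconv h₁ h₂ hu hv huv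
    have heq : u • ((0:ℝ), y₁) + v • ((0:ℝ), y₂) = ((0:ℝ), u • y₁ + v • y₂) := by
      simp [Prod.ext_iff]
    rwa [heq] at this
  have hAconv : Convex ℝ A := by
    apply Convex.prod (convex_singleton _)
    intro p hp q hq u v hu hv huv
    obtain ⟨y₁, hy₁, rfl⟩ := hp
    obtain ⟨y₂, hy₂, rfl⟩ := hq
    refine ⟨u • y₁ + v • y₂, hK0conv hy₁ hy₂ hu hv huv, ?_⟩
    have hv' : v = 1 - u := by linarith
    subst hv'
    module
  have hAne : A.Nonempty := by
    -- K0 is nonempty: combine a point at level a and (b, β)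
    obtain ⟨pa, hpa, hpa1⟩ := ha.1
    have hta : 0 ≤ -a / (b - a) := by
      apply div_nonneg (by linarith)
      have : a ≤ b := le_trans (ha.2 ⟨(b,β), hβ, rfl⟩) le_rfl
      have hab : a < b := lt_of_le_of_lt ha_le hb_pos
      linarith
    set t₀ : ℝ := -a / (b - a) with ht₀
    have hab : a < b := lt_of_le_of_lt ha_le hb_pos
    have ht₁ : t₀ ≤ 1 := by
      rw [ht₀, div_le_one (by linarith)]
      linarith [ha_le]
    have hbane : b - a ≠ 0 := by linarith
    have hmem : (1 - t₀) • pa + t₀ • ((b:ℝ), β) ∈ K :=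
      hKconv hpa hβ (by linarith) hta (by ring)
    have hfst : ((1 - t₀) • pa + t₀ • ((b:ℝ), β)).1 = 0 := by
      have : ((1 - t₀) • pa + t₀ • ((b:ℝ), β)).1 = (1 - t₀) * pa.1 + t₀ * b := rfl
      rw [this, hpa1, ht₀]
      field_simp
      ring
    set z := (1 - t₀) • pa + t₀ • ((b:ℝ), β) with hz
    have hz0 : z.2 ∈ K0 := by
      have : ((0:ℝ), z.2) = z := by
        rw [Prod.ext_iff]; exact ⟨hfst.symm, rfl⟩
      rw [hK0]; simp only [mem_setOf_eq]; rw [this]; exact hmem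
    refine ⟨(a', β + ((b - a') / b) • (z.2 - β)), ?_⟩
    rw [hA]
    exact ⟨rfl, z.2, hz0, rfl⟩
  -- C as a convex join
  have hCjoin : C = convexJoin ℝ A {((b:ℝ), β)} := by
    rw [hC]
    exact Convex.convexHull_union hAconv (convex_singleton _) hAne (singleton_nonempty _)
  constructor
  · -- first inclusion: C ∩ {0 ≤ x₁} ⊆ K ∩ {0 ≤ x₁}
    rintro p ⟨hpC, hp1⟩
    refine ⟨?_, hp1⟩
    have hp1' : (0:ℝ) ≤ p.1 := hp1
    rw [hCjoin, mem_convexJoin] at hpC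
    obtain ⟨q, hqA, r, hr, hseg⟩ := hpC
    rw [mem_singleton_iff] at hr
    subst hr
    rw [hA] at hqA
    obtain ⟨hq1, hq2⟩ := hqA
    rw [mem_singleton_iff] at hq1
    obtain ⟨y, hyK0, hyq⟩ := hq2
    obtain ⟨u, t, hu, ht, hut, hp⟩ := hseg
    -- p = u • q + t • (b, β); rewrite as combination of (0,y) and (b,β)
    have hq : q = (a', β + c • (y - β)) := by
      rw [Prod.ext_iff]
      exact ⟨hq1, hyq.symm⟩
    have hcomb : p = (u * c) • ((0:ℝ), y) + (1 - u * c) • ((b:ℝ), β) := by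
      rw [← hp, hq]
      have ht' : t = 1 - u := by linarith
      subst ht'
      simp only [Prod.smul_mk, Prod.mk_add_mk, Prod.mk.injEq, smul_eq_mul]
      constructor
      · rw [hcdef]
        field_simp
        ring
      · module
    have hfst := congrArg Prod.fst hcomb
    simp only [Prod.smul_mk, Prod.mk_add_mk, smul_eq_mul, mul_zero, zero_add] at hfst
    have htc' : 0 ≤ 1 - u * c := by
      by_contra hneg
      push_neg at hneg
      nlinarith [hp1', hb_pos, hfst]
    have huc : 0 ≤ u * c := mul_nonneg hu hc0
    rw [hcomb]
    exact hKconv hyK0 hβ huc htc' (by ring)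
  · -- second inclusion: K ∩ slab ⊆ C ∩ slab
    rintro p ⟨hpK, hpI⟩
    refine ⟨?_, hpI⟩
    obtain ⟨hpa', hp0⟩ := hpI
    have hbx : 0 < b - p.1 := by linarith
    set t : ℝ := b / (b - p.1) with htdef
    have ht0 : 0 ≤ t := by positivity
    have ht1 : t ≤ 1 := by
      rw [htdef, div_le_one hbx]
      linarith
    set z₂ : EuclideanSpace ℝ (Fin (n - 1)) := (1 - t) • β + t • p.2 with hz₂
    have hz₂K0 : z₂ ∈ K0 := by
      have hmem : (1 - t) • ((b:ℝ), β) + t • p ∈ K :=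
        hKconv hβ hpK (by linarith) ht0 (by ring)
      have heq : (1 - t) • ((b:ℝ), β) + t • p = ((0:ℝ), z₂) := by
        rw [Prod.ext_iff]
        simp only [Prod.fst_add, Prod.snd_add, Prod.smul_fst, Prod.smul_snd, smul_eq_mul]
        constructor
        · rw [htdef]
          field_simp
          ring
        · trivial
      rwa [heq] at hmem
    set s : ℝ := (p.1 - a') / (b - a') with hsdef
    have hs0 : 0 ≤ s := by
      apply div_nonneg (by linarith) (by linarith)
    have hs1 : s ≤ 1 := by
      rw [hsdef, div_le_one hba']
      linarith
    have hQA : (a', β + c • (z₂ - β)) ∈ A := by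
      rw [hA]
      exact ⟨rfl, z₂, hz₂K0, rfl⟩
    have hpeq : p = (1 - s) • (a', β + c • (z₂ - β)) + s • ((b:ℝ), β) := by
      rw [Prod.ext_iff]
      simp only [Prod.fst_add, Prod.snd_add, Prod.smul_fst, Prod.smul_snd, smul_eq_mul]
      constructor
      · rw [hsdef]
        field_simp
        ring
      · rw [hz₂, hcdef, hsdef, htdef]
        have hbxne : b - p.1 ≠ 0 := ne_of_gt hbx
        have hba'ne : b - a' ≠ 0 := ne_of_gt hba'
        match_scalars
        · field_simp
          ring
        · field_simp
          ring
    rw [hCjoin, mem_convexJoin]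
    exact ⟨(a', β + c • (z₂ - β)), hQA, ((b:ℝ), β), mem_singleton _,
      1 - s, s, by linarith, hs0, by ring, hpeq.symm⟩
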